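/- Let T₁ : H₁ → H₂ and T₂ : H₂ → H₃ be closed densely defined operators with im(T₁) ⊆ ker(T₂), and suppose the Laplacians Δ₁ = T₁*∘T₁, Δ_mid = T₁∘T₁* + T₂*∘T₂, Δ₂ = T₂∘T₂* all have discrete spectrum with trace class heat semigroups. Then for every t > 0, Tr(e^{-tΔ₁}) − Tr(e^{-tΔ_mid}) + Tr(e^{-tΔ₂}) = dim ker(Δ₁) − dim ker(Δ_mid) + dim ker(Δ₂) (a McKean–Singer formula: the alternating sum of heat traces is independent of t and equals the Euler characteristic of the complex). -/

import Mathlib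

namespace Paper

/-- Composition `S ∘ T` of partially defined (unbounded) linear maps, with domain
`{x ∈ dom T | T x ∈ dom S}` and value `S (T x)`. -/
noncomputable def pcomp {R E F G : Type*} [Ring R] [AddCommGroup E] [Module R E]
    [AddCommGroup F] [Module R F] [AddCommGroup G] [Module R G]
    (S : F →ₗ.[R] G) (T : E →ₗ.[R] F) : E →ₗ.[R] G where
  domain := (S.domain.comap T.toFun).map T.domain.subtype
  toFun :=
    (S.toFun.comp (((T.toFun.comp (S.domain.comap T.toFun).subtype)).codRestrict S.domain
      fun c => c.2)).comp
      (Submodule.equivMapOfInjective T.domain.subtype (Submodule.injective_subtype T.domain)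
        (S.domain.comap T.toFun)).symm.toLinearMap
/-- The range (image) of a partially defined linear map. -/
def pran {R E F : Type*} [Ring R] [AddCommGroup E] [Module R E] [AddCommGroup F] [Module R F]
    (T : E →ₗ.[R] F) : Set F :=
  Set.range fun x : T.domain => T x

/-- The kernel of a partially defined linear map, as a subset of the ambient space. -/
def pker {R E F : Type*} [Ring R] [AddCommGroup E] [Module R E] [AddCommGroup F] [Module R F]
    (T : E →ₗ.[R] F) : Set E :=
  {x | ∃ h : x ∈ T.domain, T ⟨x, h⟩ = 0}
/-- A (self-adjoint) operator has discrete spectrum (its spectrum consists of isolated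
eigenvalues of finite multiplicity) if and only if the inclusion of its domain, endowed with
the graph norm, into the ambient Hilbert space is a compact operator; we take this compactness
property as the definition. -/
def HasDiscreteSpectrum {E F : Type*} [NormedAddCommGroup E] [InnerProductSpace ℂ E]
    [NormedAddCommGroup F] [InnerProductSpace ℂ F] (T : E →ₗ.[ℂ] F) : Prop :=
  IsCompact (closure ((fun u : T.domain => (u : E)) ''
    {u : T.domain | ‖(u : E)‖ ^ 2 + ‖T u‖ ^ 2 ≤ 1}))

-- ### auxiliary lemmas ###
section Aux
open scoped InnerProductSpace ComplexConjugate

variable {R E F G : Type*} [Ring R] [AddCommGroup E] [Module R E]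
    [AddCommGroup F] [Module R F] [AddCommGroup G] [Module R G]

theorem mem_pcomp_iff {S : F →ₗ.[R] G} {T : E →ₗ.[R] F} {x : E} :
    x ∈ (pcomp S T).domain ↔ ∃ hx : x ∈ T.domain, T ⟨x, hx⟩ ∈ S.domain := by
  show x ∈ (S.domain.comap T.toFun).map T.domain.subtype ↔ _
  rw [Submodule.mem_map]
  constructor
  · rintro ⟨⟨y, hy⟩, hmem, rfl⟩
    exact ⟨hy, hmem⟩
  · rintro ⟨hx, hmem⟩
    exact ⟨⟨x, hx⟩, hmem, rfl⟩

theorem pcomp_apply (S : F →ₗ.[R] G) (T : E →ₗ.[R] F) {x : E} (h : x ∈ (pcomp S T).domain)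
    (hx : x ∈ T.domain) (hTx : T ⟨x, hx⟩ ∈ S.domain) :
    pcomp S T ⟨x, h⟩ = S ⟨T ⟨x, hx⟩, hTx⟩ := by
  have key : (Submodule.equivMapOfInjective T.domain.subtype
      (Submodule.injective_subtype T.domain) (S.domain.comap T.toFun)).symm ⟨x, h⟩
      = ⟨⟨x, hx⟩, hTx⟩ := by
    rw [LinearEquiv.symm_apply_eq]
    apply Subtype.ext
    simp [Submodule.equivMapOfInjective]
    rfl
  show S.toFun _ = _
  erw [LinearMap.comp_apply, key]
  rfl

open scoped InnerProductSpace ComplexConjugate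

variable {H : Type*} [NormedAddCommGroup H] [InnerProductSpace ℂ H]

/-- Application of a `LinearPMap` only depends on the underlying value. -/
theorem papp_congr {R E F : Type*} [Ring R] [AddCommGroup E] [Module R E] [AddCommGroup F]
    [Module R F] (T : E →ₗ.[R] F) {x y : T.domain} (h : (x : E) = y) : T x = T y := by
  congr 1
  exact Subtype.ext h

theorem span_subtype_induction {s : Set H} {p : (Submodule.span ℂ s) → Prop}
    (mem : ∀ x (h : x ∈ s), p ⟨x, Submodule.subset_span h⟩)
    (zero : p 0)
    (add : ∀ u v, p u → p v → p (u + v))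
    (smul : ∀ (c : ℂ) u, p u → p (c • u)) (u : Submodule.span ℂ s) : p u := by
  obtain ⟨x, hx⟩ := u
  refine Submodule.span_induction (p := fun x hx => p ⟨x, hx⟩) mem zero ?_ ?_ hx
  · intro a b ha hb pa pb; exact add ⟨a, ha⟩ ⟨b, hb⟩ pa pb
  · intro c a ha pa; exact smul c ⟨a, ha⟩ pa

theorem span_mem_helper {M : Type*} [AddCommGroup M] [Module ℂ M] {s : Set H}
    (f : (Submodule.span ℂ s) →ₗ[ℂ] M) (V : Submodule ℂ M)
    (h : ∀ x (hx : x ∈ s), f ⟨x, Submodule.subset_span hx⟩ ∈ V) :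
    ∀ u, f u ∈ V := by
  refine span_subtype_induction h ?_ ?_ ?_
  · simp
  · intro u v hu hv; rw [map_add]; exact add_mem hu hv
  · intro c u hu; rw [map_smul]; exact Submodule.smul_mem _ _ hu

theorem span_eq_helper {M : Type*} [AddCommGroup M] [Module ℂ M] {s : Set H}
    (f g : (Submodule.span ℂ s) →ₗ[ℂ] M)
    (h : ∀ x (hx : x ∈ s), f ⟨x, Submodule.subset_span hx⟩ = g ⟨x, Submodule.subset_span hx⟩) :
    ∀ u, f u = g u := by
  refine span_subtype_induction h ?_ ?_ ?_
  · simp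
  · intro u v hu hv; rw [map_add, map_add, hu, hv]
  · intro c u hu; rw [map_smul, map_smul, hu]

/-- An eigenvector of a symmetric operator lies in the span of the basis eigenvectors
with the same eigenvalue. -/
theorem eigenvector_mem_span (e : HilbertBasis ℕ ℂ H) (l : ℕ → ℝ) (D : H →ₗ.[ℂ] H)
    (heig : ∀ k, ∃ hk : e k ∈ D.domain, D ⟨e k, hk⟩ = (l k : ℂ) • e k)
    (hsym : ∀ x y : D.domain, ⟪D x, (y : H)⟫_ℂ = ⟪(x : H), D y⟫_ℂ)
    {r : ℝ} (hfin : {k | l k = r}.Finite) {w : H} (hw : w ∈ D.domain)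
    (hww : D ⟨w, hw⟩ = (r : ℂ) • w) :
    w ∈ Submodule.span ℂ (e '' {k | l k = r}) := by
  classical
  have hcoef : ∀ k, l k ≠ r → ⟪e k, w⟫_ℂ = 0 := by
    intro k hk
    obtain ⟨hek, heq⟩ := heig k
    have h1 : ⟪D ⟨e k, hek⟩, w⟫_ℂ = ⟪e k, D ⟨w, hw⟩⟫_ℂ := hsym ⟨e k, hek⟩ ⟨w, hw⟩
    rw [heq, hww, inner_smul_left, inner_smul_right, Complex.conj_ofReal] at h1
    rcases mul_eq_mul_right_iff.mp h1 with h | h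
    · exact absurd (Complex.ofReal_inj.mp h) hk
    · exact h
  have hzero : ∀ k ∉ hfin.toFinset, e.repr w k • e k = 0 := by
    intro k hk
    rw [Set.Finite.mem_toFinset, Set.mem_setOf_eq] at hk
    rw [e.repr_apply_apply, hcoef k hk, zero_smul]
  have h2 : HasSum (fun k => e.repr w k • e k) (∑ k ∈ hfin.toFinset, e.repr w k • e k) :=
    hasSum_sum_of_ne_finset_zero hzero
  have h3 : w = ∑ k ∈ hfin.toFinset, e.repr w k • e k := (e.hasSum_repr w).unique h2
  rw [h3]
  refine Submodule.sum_mem _ fun k hk => Submodule.smul_mem _ _ ?_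
  exact Submodule.subset_span ⟨k, Set.Finite.mem_toFinset hfin |>.mp hk, rfl⟩

theorem card_span_eq (e : HilbertBasis ℕ ℂ H) {s : Set ℕ} (hs : s.Finite) :
    Module.finrank ℂ (Submodule.span ℂ (e '' s)) = Nat.card s := by
  classical
  haveI := hs.fintype
  have li : LinearIndependent ℂ (fun k : s => e k) :=
    e.orthonormal.linearIndependent.comp _ Subtype.val_injective
  rw [Set.image_eq_range e s, finrank_span_eq_card li, Nat.card_eq_fintype_card]

section Ops
variable {H₁ H₂ H₃ : Type*}
  [NormedAddCommGroup H₁] [InnerProductSpace ℂ H₁] [CompleteSpace H₁]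
  [NormedAddCommGroup H₂] [InnerProductSpace ℂ H₂] [CompleteSpace H₂]
  [NormedAddCommGroup H₃] [InnerProductSpace ℂ H₃] [CompleteSpace H₃]

theorem inner_downT (A : H₁ →ₗ.[ℂ] H₂) (hd : Dense (A.domain : Set H₁))
    (x : (pcomp A.adjoint A).domain) (hx1 : (x : H₁) ∈ A.domain) (y : A.domain) :
    ⟪pcomp A.adjoint A x, (y : H₁)⟫_ℂ = ⟪A ⟨(x : H₁), hx1⟩, A y⟫_ℂ := by
  obtain ⟨x, hx⟩ := x
  obtain ⟨hx1', hx2⟩ := mem_pcomp_iff.mp hx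
  rw [pcomp_apply _ _ hx hx1 (by convert hx2)]
  exact (LinearPMap.adjoint_isFormalAdjoint hd) ⟨_, by convert hx2⟩ y

theorem inner_upT (A : H₁ →ₗ.[ℂ] H₂) (hd : Dense (A.domain : Set H₁))
    (x : (pcomp A A.adjoint).domain) (hx1 : (x : H₂) ∈ A.adjoint.domain)
    (y : A.adjoint.domain) :
    ⟪pcomp A A.adjoint x, (y : H₂)⟫_ℂ = ⟪A.adjoint ⟨(x : H₂), hx1⟩, A.adjoint y⟫_ℂ := by
  obtain ⟨x, hx⟩ := x
  obtain ⟨hx1', hx2⟩ := mem_pcomp_iff.mp hx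
  rw [pcomp_apply _ _ hx hx1 (by convert hx2)]
  exact (LinearPMap.adjoint_isFormalAdjoint hd).symm ⟨_, by convert hx2⟩ y

theorem sym_down (A : H₁ →ₗ.[ℂ] H₂) (hd : Dense (A.domain : Set H₁))
    (x y : (pcomp A.adjoint A).domain) :
    ⟪pcomp A.adjoint A x, (y : H₁)⟫_ℂ = ⟪(x : H₁), pcomp A.adjoint A y⟫_ℂ := by
  have hx1 : (x : H₁) ∈ A.domain := (mem_pcomp_iff.mp x.2).choose
  have hy1 : (y : H₁) ∈ A.domain := (mem_pcomp_iff.mp y.2).choose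
  rw [inner_downT A hd x hx1 ⟨y, hy1⟩, ← inner_conj_symm ((x : H₁)),
    inner_downT A hd y hy1 ⟨x, hx1⟩, inner_conj_symm]

theorem sym_up (A : H₁ →ₗ.[ℂ] H₂) (hd : Dense (A.domain : Set H₁))
    (x y : (pcomp A A.adjoint).domain) :
    ⟪pcomp A A.adjoint x, (y : H₂)⟫_ℂ = ⟪(x : H₂), pcomp A A.adjoint y⟫_ℂ := by
  have hx1 : (x : H₂) ∈ A.adjoint.domain := (mem_pcomp_iff.mp x.2).choose
  have hy1 : (y : H₂) ∈ A.adjoint.domain := (mem_pcomp_iff.mp y.2).choose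
  rw [inner_upT A hd x hx1 ⟨y, hy1⟩, ← inner_conj_symm ((x : H₂)),
    inner_upT A hd y hy1 ⟨x, hx1⟩, inner_conj_symm]

theorem sym_mid (A : H₁ →ₗ.[ℂ] H₂) (B : H₂ →ₗ.[ℂ] H₃)
    (hd₁ : Dense (A.domain : Set H₁)) (hd₂ : Dense (B.domain : Set H₂))
    (x y : (pcomp A A.adjoint + pcomp B.adjoint B).domain) :
    ⟪(pcomp A A.adjoint + pcomp B.adjoint B) x, (y : H₂)⟫_ℂ
      = ⟪(x : H₂), (pcomp A A.adjoint + pcomp B.adjoint B) y⟫_ℂ := by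
  have hxa : (x : H₂) ∈ (pcomp A A.adjoint).domain := x.2.1
  have hxb : (x : H₂) ∈ (pcomp B.adjoint B).domain := x.2.2
  have hya : (y : H₂) ∈ (pcomp A A.adjoint).domain := y.2.1
  have hyb : (y : H₂) ∈ (pcomp B.adjoint B).domain := y.2.2
  have hx1 : (x : H₂) ∈ A.adjoint.domain := (mem_pcomp_iff.mp hxa).choose
  have hy1 : (y : H₂) ∈ A.adjoint.domain := (mem_pcomp_iff.mp hya).choose
  have hx1b : (x : H₂) ∈ B.domain := (mem_pcomp_iff.mp hxb).choose
  have hy1b : (y : H₂) ∈ B.domain := (mem_pcomp_iff.mp hyb).choose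
  have ex : (pcomp A A.adjoint + pcomp B.adjoint B) x
      = pcomp A A.adjoint ⟨x, hxa⟩ + pcomp B.adjoint B ⟨x, hxb⟩ := by
    obtain ⟨x, hx⟩ := x; exact LinearPMap.add_apply _ _ _
  have ey : (pcomp A A.adjoint + pcomp B.adjoint B) y
      = pcomp A A.adjoint ⟨y, hya⟩ + pcomp B.adjoint B ⟨y, hyb⟩ := by
    obtain ⟨y, hy⟩ := y; exact LinearPMap.add_apply _ _ _
  rw [ex, ey, inner_add_left, inner_add_right,
    inner_upT A hd₁ ⟨x, hxa⟩ hx1 ⟨y, hy1⟩, inner_downT B hd₂ ⟨x, hxb⟩ hx1b ⟨y, hy1b⟩,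
    ← inner_conj_symm ((x : H₂)) (pcomp A A.adjoint ⟨y, hya⟩),
    ← inner_conj_symm ((x : H₂)) (pcomp B.adjoint B ⟨y, hyb⟩),
    inner_upT A hd₁ ⟨y, hya⟩ hy1 ⟨x, hx1⟩, inner_downT B hd₂ ⟨y, hyb⟩ hy1b ⟨x, hx1b⟩,
    inner_conj_symm, inner_conj_symm]

theorem bstar_orth_ranA (A : H₁ →ₗ.[ℂ] H₂) (B : H₂ →ₗ.[ℂ] H₃)
    (hd₂ : Dense (B.domain : Set H₂)) (hcpx : pran A ⊆ pker B)
    (x : A.domain) (v : B.adjoint.domain) :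
    ⟪A x, B.adjoint v⟫_ℂ = 0 := by
  obtain ⟨hmem, hz⟩ := hcpx ⟨x, rfl⟩
  have h := (LinearPMap.adjoint_isFormalAdjoint hd₂) v ⟨A x, hmem⟩
  rw [hz, inner_zero_right] at h
  rw [← inner_conj_symm, h, map_zero]

theorem bstar_mem_adjoint_domain (A : H₁ →ₗ.[ℂ] H₂) (B : H₂ →ₗ.[ℂ] H₃)
    (hd₁ : Dense (A.domain : Set H₁)) (hd₂ : Dense (B.domain : Set H₂))
    (hcpx : pran A ⊆ pker B) (v : B.adjoint.domain) :
    ∃ h : (B.adjoint v) ∈ A.adjoint.domain, A.adjoint ⟨B.adjoint v, h⟩ = 0 := by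
  have key : ∀ x : A.domain, ⟪(0 : H₁), (x : H₁)⟫_ℂ = ⟪B.adjoint v, A x⟫_ℂ := by
    intro x
    rw [inner_zero_left, ← inner_conj_symm, bstar_orth_ranA A B hd₂ hcpx x v, map_zero]
  have hmem : (B.adjoint v) ∈ A.adjoint.domain :=
    LinearPMap.mem_adjoint_domain_of_exists _ ⟨0, key⟩
  exact ⟨hmem, LinearPMap.adjoint_apply_eq hd₁ ⟨_, hmem⟩ key⟩

end Ops

section Papp
variable {R E F : Type*} [Ring R] [AddCommGroup E] [Module R E] [AddCommGroup F] [Module R F]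

theorem papp_eq_zero (T : E →ₗ.[R] F) {x : T.domain} (h : (x : E) = 0) : T x = 0 := by
  rw [papp_congr T (y := 0) h]
  exact T.map_zero

theorem papp_eq_smul (T : E →ₗ.[R] F) {x : T.domain} {c : R} {y : E} (hy : y ∈ T.domain)
    (h : (x : E) = c • y) : T x = c • T ⟨y, hy⟩ := by
  rw [papp_congr T (y := c • ⟨y, hy⟩) h]
  exact T.map_smul c ⟨y, hy⟩

theorem papp_eq_smul_sub (T : E →ₗ.[R] F) {x : T.domain} {c : R} {y z : E}
    (hy : y ∈ T.domain) (hz : z ∈ T.domain) (h : (x : E) = c • y - z) :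
    T x = c • T ⟨y, hy⟩ - T ⟨z, hz⟩ := by
  rw [papp_congr T (y := c • ⟨y, hy⟩ - ⟨z, hz⟩) h]
  show T.toFun _ = _
  rw [map_sub, map_smul]
  rfl

end Papp

section Core
variable {H₁ H₂ H₃ : Type*}
  [NormedAddCommGroup H₁] [InnerProductSpace ℂ H₁] [CompleteSpace H₁]
  [NormedAddCommGroup H₂] [InnerProductSpace ℂ H₂] [CompleteSpace H₂]
  [NormedAddCommGroup H₃] [InnerProductSpace ℂ H₃] [CompleteSpace H₃]

set_option maxHeartbeats 2000000 in
theorem core_card (A : H₁ →ₗ.[ℂ] H₂) (B : H₂ →ₗ.[ℂ] H₃)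
    (hd₁ : Dense (A.domain : Set H₁)) (hd₂ : Dense (B.domain : Set H₂))
    (hcpx : pran A ⊆ pker B)
    (e₁ : HilbertBasis ℕ ℂ H₁) (l₁ : ℕ → ℝ)
    (heig₁ : ∀ k, ∃ hk : e₁ k ∈ (pcomp A.adjoint A).domain,
      (pcomp A.adjoint A) ⟨e₁ k, hk⟩ = (l₁ k : ℂ) • e₁ k)
    (e₂ : HilbertBasis ℕ ℂ H₂) (l₂ : ℕ → ℝ)
    (heig₂ : ∀ k, ∃ hk : e₂ k ∈ (pcomp A A.adjoint + pcomp B.adjoint B).domain,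
      (pcomp A A.adjoint + pcomp B.adjoint B) ⟨e₂ k, hk⟩ = (l₂ k : ℂ) • e₂ k)
    (e₃ : HilbertBasis ℕ ℂ H₃) (l₃ : ℕ → ℝ)
    (heig₃ : ∀ k, ∃ hk : e₃ k ∈ (pcomp B B.adjoint).domain,
      (pcomp B B.adjoint) ⟨e₃ k, hk⟩ = (l₃ k : ℂ) • e₃ k)
    {r : ℝ} (hr : 0 < r)
    (hfin₁ : {k | l₁ k = r}.Finite) (hfin₂ : {k | l₂ k = r}.Finite)
    (hfin₃ : {k | l₃ k = r}.Finite) :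
    Nat.card {k | l₂ k = r} = Nat.card {k | l₁ k = r} + Nat.card {k | l₃ k = r} := by
  classical
  have hrC : (r : ℂ) ≠ 0 := by exact_mod_cast ne_of_gt hr
  -- generator unpackings
  have gen₁ : ∀ k, ∃ (h1 : e₁ k ∈ A.domain) (h2 : A ⟨e₁ k, h1⟩ ∈ A.adjoint.domain),
      A.adjoint ⟨A ⟨e₁ k, h1⟩, h2⟩ = (l₁ k : ℂ) • e₁ k := by
    intro k
    obtain ⟨hk, heq⟩ := heig₁ k
    obtain ⟨h1, h2⟩ := mem_pcomp_iff.mp hk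
    refine ⟨h1, h2, ?_⟩
    rw [← pcomp_apply A.adjoint A hk h1 h2]
    exact heq
  have gen₃ : ∀ k, ∃ (h1 : e₃ k ∈ B.adjoint.domain) (h2 : B.adjoint ⟨e₃ k, h1⟩ ∈ B.domain),
      B ⟨B.adjoint ⟨e₃ k, h1⟩, h2⟩ = (l₃ k : ℂ) • e₃ k := by
    intro k
    obtain ⟨hk, heq⟩ := heig₃ k
    obtain ⟨h1, h2⟩ := mem_pcomp_iff.mp hk
    refine ⟨h1, h2, ?_⟩
    rw [← pcomp_apply B B.adjoint hk h1 h2]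
    exact heq
  have gen₂ : ∀ k, ∃ (ha1 : e₂ k ∈ A.adjoint.domain) (ha2 : A.adjoint ⟨e₂ k, ha1⟩ ∈ A.domain)
      (hb1 : e₂ k ∈ B.domain) (hb2 : B ⟨e₂ k, hb1⟩ ∈ B.adjoint.domain),
      A ⟨A.adjoint ⟨e₂ k, ha1⟩, ha2⟩ + B.adjoint ⟨B ⟨e₂ k, hb1⟩, hb2⟩ = (l₂ k : ℂ) • e₂ k := by
    intro k
    obtain ⟨hk, heq⟩ := heig₂ k
    obtain ⟨ha1, ha2⟩ := mem_pcomp_iff.mp hk.1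
    obtain ⟨hb1, hb2⟩ := mem_pcomp_iff.mp hk.2
    refine ⟨ha1, ha2, hb1, hb2, ?_⟩
    have hadd : (pcomp A A.adjoint + pcomp B.adjoint B) ⟨e₂ k, hk⟩
        = pcomp A A.adjoint ⟨e₂ k, hk.1⟩ + pcomp B.adjoint B ⟨e₂ k, hk.2⟩ :=
      LinearPMap.add_apply _ _ _
    rw [pcomp_apply A A.adjoint hk.1 ha1 ha2, pcomp_apply B.adjoint B hk.2 hb1 hb2] at hadd
    rw [← hadd]
    exact heq
  -- spans
  set V₁ := Submodule.span ℂ (e₁ '' {k | l₁ k = r}) with hV₁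
  set V₂ := Submodule.span ℂ (e₂ '' {k | l₂ k = r}) with hV₂
  set V₃ := Submodule.span ℂ (e₃ '' {k | l₃ k = r}) with hV₃
  haveI : FiniteDimensional ℂ V₁ := FiniteDimensional.span_of_finite ℂ (hfin₁.image e₁)
  haveI : FiniteDimensional ℂ V₂ := FiniteDimensional.span_of_finite ℂ (hfin₂.image e₂)
  haveI : FiniteDimensional ℂ V₃ := FiniteDimensional.span_of_finite ℂ (hfin₃.image e₃)
  have hV₁A : V₁ ≤ A.domain := by
    refine Submodule.span_le.mpr ?_
    rintro _ ⟨k, -, rfl⟩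
    exact (gen₁ k).choose
  have hV₃B' : V₃ ≤ B.adjoint.domain := by
    refine Submodule.span_le.mpr ?_
    rintro _ ⟨k, -, rfl⟩
    exact (gen₃ k).choose
  have hV₂A' : V₂ ≤ A.adjoint.domain := by
    refine Submodule.span_le.mpr ?_
    rintro _ ⟨k, -, rfl⟩
    exact (gen₂ k).choose
  have hV₂B : V₂ ≤ B.domain := by
    refine Submodule.span_le.mpr ?_
    rintro _ ⟨k, -, rfl⟩
    exact (gen₂ k).choose_spec.choose_spec.choose
  -- capture facts for generators
  have capA : ∀ k, l₁ k = r → ∀ h1 : e₁ k ∈ A.domain, A ⟨e₁ k, h1⟩ ∈ V₂ := by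
    intro k hk h1
    obtain ⟨h1', h2', heq'⟩ := gen₁ k
    have h2 : A ⟨e₁ k, h1⟩ ∈ A.adjoint.domain := h2'
    have heq : A.adjoint ⟨A ⟨e₁ k, h1⟩, h2⟩ = (l₁ k : ℂ) • e₁ k := heq'
    obtain ⟨hmB, hzB⟩ := hcpx (⟨⟨e₁ k, h1⟩, rfl⟩ : A ⟨e₁ k, h1⟩ ∈ pran A)
    have hm2 : A.adjoint ⟨A ⟨e₁ k, h1⟩, h2⟩ ∈ A.domain := by
      rw [heq]; exact Submodule.smul_mem _ _ h1
    have hm2' : B ⟨A ⟨e₁ k, h1⟩, hmB⟩ ∈ B.adjoint.domain := by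
      rw [hzB]; exact zero_mem _
    have hmemA : A ⟨e₁ k, h1⟩ ∈ (pcomp A A.adjoint).domain := mem_pcomp_iff.mpr ⟨h2, hm2⟩
    have hmemB : A ⟨e₁ k, h1⟩ ∈ (pcomp B.adjoint B).domain := mem_pcomp_iff.mpr ⟨hmB, hm2'⟩
    have hmem : A ⟨e₁ k, h1⟩ ∈ (pcomp A A.adjoint + pcomp B.adjoint B).domain := ⟨hmemA, hmemB⟩
    have v1 : pcomp A A.adjoint ⟨A ⟨e₁ k, h1⟩, hmemA⟩ = (l₁ k : ℂ) • A ⟨e₁ k, h1⟩ :=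
      (pcomp_apply A A.adjoint hmemA h2 hm2).trans (papp_eq_smul A h1 heq)
    have v2 : pcomp B.adjoint B ⟨A ⟨e₁ k, h1⟩, hmemB⟩ = 0 :=
      (pcomp_apply B.adjoint B hmemB hmB hm2').trans (papp_eq_zero B.adjoint hzB)
    have hval : (pcomp A A.adjoint + pcomp B.adjoint B) ⟨A ⟨e₁ k, h1⟩, hmem⟩
        = (r : ℂ) • (A ⟨e₁ k, h1⟩) := by
      have hadd : (pcomp A A.adjoint + pcomp B.adjoint B) ⟨A ⟨e₁ k, h1⟩, hmem⟩
          = pcomp A A.adjoint ⟨A ⟨e₁ k, h1⟩, hmemA⟩ + pcomp B.adjoint B ⟨A ⟨e₁ k, h1⟩, hmemB⟩ :=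
        LinearPMap.add_apply _ _ _
      rw [hadd, v1, v2, hk, add_zero]
    exact eigenvector_mem_span e₂ l₂ _ heig₂ (sym_mid A B hd₁ hd₂) hfin₂ hmem hval
  have capB : ∀ k, l₃ k = r → ∀ h1 : e₃ k ∈ B.adjoint.domain, B.adjoint ⟨e₃ k, h1⟩ ∈ V₂ := by
    intro k hk h1
    obtain ⟨h1', h2', heq'⟩ := gen₃ k
    have h2 : B.adjoint ⟨e₃ k, h1⟩ ∈ B.domain := h2'
    have heq : B ⟨B.adjoint ⟨e₃ k, h1⟩, h2⟩ = (l₃ k : ℂ) • e₃ k := heq'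
    obtain ⟨hza, hza0⟩ := bstar_mem_adjoint_domain A B hd₁ hd₂ hcpx ⟨e₃ k, h1⟩
    have hm2 : A.adjoint ⟨B.adjoint ⟨e₃ k, h1⟩, hza⟩ ∈ A.domain := by
      rw [hza0]; exact zero_mem _
    have hm2' : B ⟨B.adjoint ⟨e₃ k, h1⟩, h2⟩ ∈ B.adjoint.domain := by
      rw [heq]; exact Submodule.smul_mem _ _ h1
    have hmemA : B.adjoint ⟨e₃ k, h1⟩ ∈ (pcomp A A.adjoint).domain :=
      mem_pcomp_iff.mpr ⟨hza, hm2⟩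
    have hmemB : B.adjoint ⟨e₃ k, h1⟩ ∈ (pcomp B.adjoint B).domain :=
      mem_pcomp_iff.mpr ⟨h2, hm2'⟩
    have hmem : B.adjoint ⟨e₃ k, h1⟩ ∈ (pcomp A A.adjoint + pcomp B.adjoint B).domain :=
      ⟨hmemA, hmemB⟩
    have v1 : pcomp A A.adjoint ⟨B.adjoint ⟨e₃ k, h1⟩, hmemA⟩ = 0 :=
      (pcomp_apply A A.adjoint hmemA hza hm2).trans (papp_eq_zero A hza0)
    have v2 : pcomp B.adjoint B ⟨B.adjoint ⟨e₃ k, h1⟩, hmemB⟩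
        = (l₃ k : ℂ) • B.adjoint ⟨e₃ k, h1⟩ :=
      (pcomp_apply B.adjoint B hmemB h2 hm2').trans (papp_eq_smul B.adjoint h1 heq)
    have hval : (pcomp A A.adjoint + pcomp B.adjoint B) ⟨B.adjoint ⟨e₃ k, h1⟩, hmem⟩
        = (r : ℂ) • (B.adjoint ⟨e₃ k, h1⟩) := by
      have hadd : (pcomp A A.adjoint + pcomp B.adjoint B) ⟨B.adjoint ⟨e₃ k, h1⟩, hmem⟩
          = pcomp A A.adjoint ⟨B.adjoint ⟨e₃ k, h1⟩, hmemA⟩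
            + pcomp B.adjoint B ⟨B.adjoint ⟨e₃ k, h1⟩, hmemB⟩ :=
        LinearPMap.add_apply _ _ _
      rw [hadd, v1, v2, hk, zero_add]
    exact eigenvector_mem_span e₂ l₂ _ heig₂ (sym_mid A B hd₁ hd₂) hfin₂ hmem hval
  have capMidA : ∀ k, l₂ k = r → ∀ h1 : e₂ k ∈ A.adjoint.domain, A.adjoint ⟨e₂ k, h1⟩ ∈ V₁ := by
    intro k hk h1
    obtain ⟨ha1, ha2', hb1, hb2, heq'⟩ := gen₂ k
    have ha2 : A.adjoint ⟨e₂ k, h1⟩ ∈ A.domain := ha2'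
    have heq : A ⟨A.adjoint ⟨e₂ k, h1⟩, ha2⟩ + B.adjoint ⟨B ⟨e₂ k, hb1⟩, hb2⟩
        = (l₂ k : ℂ) • e₂ k := heq'
    obtain ⟨hza, hza0⟩ := bstar_mem_adjoint_domain A B hd₁ hd₂ hcpx ⟨B ⟨e₂ k, hb1⟩, hb2⟩
    have hsub : (A ⟨A.adjoint ⟨e₂ k, h1⟩, ha2⟩ : H₂)
        = (l₂ k : ℂ) • e₂ k - B.adjoint ⟨B ⟨e₂ k, hb1⟩, hb2⟩ := eq_sub_of_add_eq heq
    have hm2 : A ⟨A.adjoint ⟨e₂ k, h1⟩, ha2⟩ ∈ A.adjoint.domain := by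
      rw [hsub]
      exact Submodule.sub_mem _ (Submodule.smul_mem _ _ h1) hza
    have hmem : A.adjoint ⟨e₂ k, h1⟩ ∈ (pcomp A.adjoint A).domain :=
      mem_pcomp_iff.mpr ⟨ha2, hm2⟩
    have hval : pcomp A.adjoint A ⟨A.adjoint ⟨e₂ k, h1⟩, hmem⟩
        = (r : ℂ) • (A.adjoint ⟨e₂ k, h1⟩) := by
      rw [pcomp_apply A.adjoint A hmem ha2 hm2,
        papp_eq_smul_sub A.adjoint h1 hza hsub, hza0, sub_zero, hk]
    exact eigenvector_mem_span e₁ l₁ _ heig₁ (sym_down A hd₁) hfin₁ hmem hval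
  have capMidB : ∀ k, l₂ k = r → ∀ hb1 : e₂ k ∈ B.domain, B ⟨e₂ k, hb1⟩ ∈ V₃ := by
    intro k hk hb1
    obtain ⟨ha1, ha2, hb1', hb2', heq'⟩ := gen₂ k
    have hb2 : B ⟨e₂ k, hb1⟩ ∈ B.adjoint.domain := hb2'
    have heq : A ⟨A.adjoint ⟨e₂ k, ha1⟩, ha2⟩ + B.adjoint ⟨B ⟨e₂ k, hb1⟩, hb2⟩
        = (l₂ k : ℂ) • e₂ k := heq'
    obtain ⟨hmB, hzB⟩ := hcpx (⟨⟨A.adjoint ⟨e₂ k, ha1⟩, ha2⟩, rfl⟩ :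
      A ⟨A.adjoint ⟨e₂ k, ha1⟩, ha2⟩ ∈ pran A)
    have hsub : (B.adjoint ⟨B ⟨e₂ k, hb1⟩, hb2⟩ : H₂)
        = (l₂ k : ℂ) • e₂ k - A ⟨A.adjoint ⟨e₂ k, ha1⟩, ha2⟩ := eq_sub_of_add_eq' heq
    have hm2 : B.adjoint ⟨B ⟨e₂ k, hb1⟩, hb2⟩ ∈ B.domain := by
      rw [hsub]
      exact Submodule.sub_mem _ (Submodule.smul_mem _ _ hb1) hmB
    have hmem : B ⟨e₂ k, hb1⟩ ∈ (pcomp B B.adjoint).domain := mem_pcomp_iff.mpr ⟨hb2, hm2⟩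
    have hval : pcomp B B.adjoint ⟨B ⟨e₂ k, hb1⟩, hmem⟩ = (r : ℂ) • (B ⟨e₂ k, hb1⟩) := by
      rw [pcomp_apply B B.adjoint hmem hb2 hm2,
        papp_eq_smul_sub B hb1 hmB hsub, hzB, sub_zero, hk]
    exact eigenvector_mem_span e₃ l₃ _ heig₃ (sym_up B hd₂) hfin₃ hmem hval
  -- linear maps on the spans
  set Phi1 : V₁ →ₗ[ℂ] H₂ := A.toFun.comp (Submodule.inclusion hV₁A) with hPhi1
  set Phi3 : V₃ →ₗ[ℂ] H₂ := B.adjoint.toFun.comp (Submodule.inclusion hV₃B') with hPhi3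
  set Psa : V₂ →ₗ[ℂ] H₁ := A.adjoint.toFun.comp (Submodule.inclusion hV₂A') with hPsa
  set Psb : V₂ →ₗ[ℂ] H₃ := B.toFun.comp (Submodule.inclusion hV₂B) with hPsb
  have hPhi1V₂ : ∀ u : V₁, Phi1 u ∈ V₂ := by
    refine span_mem_helper Phi1 V₂ ?_
    rintro _ ⟨k, hk, rfl⟩
    exact capA k hk _
  have hPhi3V₂ : ∀ u : V₃, Phi3 u ∈ V₂ := by
    refine span_mem_helper Phi3 V₂ ?_
    rintro _ ⟨k, hk, rfl⟩
    exact capB k hk _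
  have hPsaV₁ : ∀ w : V₂, Psa w ∈ V₁ := by
    refine span_mem_helper Psa V₁ ?_
    rintro _ ⟨k, hk, rfl⟩
    exact capMidA k hk _
  have hPsbV₃ : ∀ w : V₂, Psb w ∈ V₃ := by
    refine span_mem_helper Psb V₃ ?_
    rintro _ ⟨k, hk, rfl⟩
    exact capMidB k hk _
  have hPhi1A' : ∀ u : V₁, Phi1 u ∈ A.adjoint.domain := by
    refine span_mem_helper Phi1 A.adjoint.domain ?_
    rintro _ ⟨k, hk, rfl⟩
    exact (gen₁ k).choose_spec.choose
  have hPhi3B : ∀ u : V₃, Phi3 u ∈ B.domain := by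
    refine span_mem_helper Phi3 B.domain ?_
    rintro _ ⟨k, hk, rfl⟩
    exact (gen₃ k).choose_spec.choose
  have hPsaA : ∀ w : V₂, Psa w ∈ A.domain := fun w => hV₁A (hPsaV₁ w)
  have hPsbB' : ∀ w : V₂, Psb w ∈ B.adjoint.domain := fun w => hV₃B' (hPsbV₃ w)
  -- the "inverse" identities
  set rho1 : V₁ →ₗ[ℂ] H₁ :=
    A.adjoint.toFun.comp (LinearMap.codRestrict A.adjoint.domain Phi1 hPhi1A') with hrho1
  set rho3 : V₃ →ₗ[ℂ] H₃ :=
    B.toFun.comp (LinearMap.codRestrict B.domain Phi3 hPhi3B) with hrho3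
  have idrho1 : ∀ u : V₁, rho1 u = (r : ℂ) • (u : H₁) := by
    have := span_eq_helper rho1 ((r : ℂ) • V₁.subtype) ?_
    · intro u; rw [this u]; rfl
    · rintro _ ⟨k, hk, rfl⟩
      obtain ⟨h1, h2, heq⟩ := gen₁ k
      have hv : rho1 ⟨e₁ k, Submodule.subset_span ⟨k, hk, rfl⟩⟩
          = A.adjoint ⟨A ⟨e₁ k, h1⟩, h2⟩ := rfl
      rw [hv, heq, hk]
      rfl
  have idrho3 : ∀ u : V₃, rho3 u = (r : ℂ) • (u : H₃) := by
    have := span_eq_helper rho3 ((r : ℂ) • V₃.subtype) ?_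
    · intro u; rw [this u]; rfl
    · rintro _ ⟨k, hk, rfl⟩
      obtain ⟨h1, h2, heq⟩ := gen₃ k
      have hv : rho3 ⟨e₃ k, Submodule.subset_span ⟨k, hk, rfl⟩⟩
          = B ⟨B.adjoint ⟨e₃ k, h1⟩, h2⟩ := rfl
      rw [hv, heq, hk]
      rfl
  set mu : V₂ →ₗ[ℂ] H₂ :=
    A.toFun.comp (LinearMap.codRestrict A.domain Psa hPsaA)
      + B.adjoint.toFun.comp (LinearMap.codRestrict B.adjoint.domain Psb hPsbB') with hmu
  have idmu : ∀ w : V₂, mu w = (r : ℂ) • (w : H₂) := by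
    have := span_eq_helper mu ((r : ℂ) • V₂.subtype) ?_
    · intro w; rw [this w]; rfl
    · rintro _ ⟨k, hk, rfl⟩
      obtain ⟨ha1, ha2, hb1, hb2, heq⟩ := gen₂ k
      have hv : mu ⟨e₂ k, Submodule.subset_span ⟨k, hk, rfl⟩⟩
          = A ⟨A.adjoint ⟨e₂ k, ha1⟩, ha2⟩ + B.adjoint ⟨B ⟨e₂ k, hb1⟩, hb2⟩ := rfl
      rw [hv, heq, hk]
      rfl
  -- injective map V₁ × V₃ → V₂
  set theta : V₁ × V₃ →ₗ[ℂ] V₂ :=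
    LinearMap.codRestrict V₂
      (Phi1.comp (LinearMap.fst ℂ V₁ V₃) + Phi3.comp (LinearMap.snd ℂ V₁ V₃))
      (fun p => add_mem (hPhi1V₂ p.1) (hPhi3V₂ p.2)) with htheta
  have thetainj : Function.Injective theta := by
    rw [← LinearMap.ker_eq_bot, LinearMap.ker_eq_bot']
    rintro ⟨u, v⟩ hp
    have h0 : Phi1 u + Phi3 v = 0 := congrArg Subtype.val hp
    have horth : ⟪Phi1 u, Phi3 v⟫_ℂ = 0 :=
      bstar_orth_ranA A B hd₂ hcpx (Submodule.inclusion hV₁A u) (Submodule.inclusion hV₃B' v)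
    have hy' : Phi3 v = -Phi1 u := eq_neg_of_add_eq_zero_right h0
    have hx0 : Phi1 u = 0 := by
      rw [hy', inner_neg_right, neg_eq_zero, inner_self_eq_zero] at horth
      exact horth
    have hy0 : Phi3 v = 0 := by rw [hy', hx0, neg_zero]
    have hu : (r : ℂ) • (u : H₁) = 0 := by
      rw [← idrho1 u]
      exact papp_eq_zero A.adjoint hx0
    have hv : (r : ℂ) • (v : H₃) = 0 := by
      rw [← idrho3 v]
      exact papp_eq_zero B hy0
    have hu0 : u = 0 := by
      apply Subtype.ext
      exact (smul_eq_zero.mp hu).resolve_left hrC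
    have hv0 : v = 0 := by
      apply Subtype.ext
      exact (smul_eq_zero.mp hv).resolve_left hrC
    rw [hu0, hv0]
    rfl
  -- injective map V₂ → V₁ × V₃
  set eta : V₂ →ₗ[ℂ] V₁ × V₃ :=
    (LinearMap.codRestrict V₁ Psa hPsaV₁).prod (LinearMap.codRestrict V₃ Psb hPsbV₃) with heta
  have etainj : Function.Injective eta := by
    rw [← LinearMap.ker_eq_bot, LinearMap.ker_eq_bot']
    intro w hw
    have ha : Psa w = 0 := congrArg (fun p : V₁ × V₃ => ((p.1 : V₁) : H₁)) hw
    have hb : Psb w = 0 := congrArg (fun p : V₁ × V₃ => ((p.2 : V₃) : H₃)) hw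
    have hmu0 : mu w = 0 := by
      have hsplit : mu w = A ⟨Psa w, hPsaA w⟩ + B.adjoint ⟨Psb w, hPsbB' w⟩ := rfl
      rw [hsplit, papp_eq_zero A ha, papp_eq_zero B.adjoint hb, add_zero]
    have hw0 : (r : ℂ) • (w : H₂) = 0 := by rw [← idmu w]; exact hmu0
    apply Subtype.ext
    exact (smul_eq_zero.mp hw0).resolve_left hrC
  have i1 : Module.finrank ℂ V₁ + Module.finrank ℂ V₃ ≤ Module.finrank ℂ V₂ := by
    have := LinearMap.finrank_le_finrank_of_injective thetainj
    rwa [Module.finrank_prod] at this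
  have i2 : Module.finrank ℂ V₂ ≤ Module.finrank ℂ V₁ + Module.finrank ℂ V₃ := by
    have := LinearMap.finrank_le_finrank_of_injective etainj
    rwa [Module.finrank_prod] at this
  have c1 : Module.finrank ℂ V₁ = Nat.card {k | l₁ k = r} := card_span_eq e₁ hfin₁
  have c2 : Module.finrank ℂ V₂ = Nat.card {k | l₂ k = r} := card_span_eq e₂ hfin₂
  have c3 : Module.finrank ℂ V₃ = Nat.card {k | l₃ k = r} := card_span_eq e₃ hfin₃
  omega

end Core
section Ker
variable {H : Type*} [NormedAddCommGroup H] [InnerProductSpace ℂ H]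

theorem ker_card (e : HilbertBasis ℕ ℂ H) (l : ℕ → ℝ) (D : H →ₗ.[ℂ] H)
    (heig : ∀ k, ∃ hk : e k ∈ D.domain, D ⟨e k, hk⟩ = (l k : ℂ) • e k)
    (hsym : ∀ x y : D.domain, ⟪D x, (y : H)⟫_ℂ = ⟪(x : H), D y⟫_ℂ)
    (hfin : {k | l k = 0}.Finite) :
    Module.finrank ℂ (LinearMap.ker D.toFun) = Nat.card {k | l k = 0} := by
  classical
  set V := Submodule.span ℂ (e '' {k | l k = 0}) with hV
  have hle : V ≤ D.domain :=
    Submodule.span_le.mpr (by rintro _ ⟨k, -, rfl⟩; exact (heig k).choose)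
  have fwd_mem : ∀ x : LinearMap.ker D.toFun, ((x : D.domain) : H) ∈ V := by
    intro x
    refine eigenvector_mem_span e l D heig hsym (r := 0) hfin (x : D.domain).2 ?_
    rw [Complex.ofReal_zero, zero_smul]
    exact x.2
  set f : LinearMap.ker D.toFun →ₗ[ℂ] V :=
    LinearMap.codRestrict V (D.domain.subtype.comp (LinearMap.ker D.toFun).subtype) fwd_mem
    with hf
  have bwd0 : ∀ u : V, D.toFun (Submodule.inclusion hle u) = 0 := by
    have h := span_eq_helper (D.toFun.comp (Submodule.inclusion hle)) (0 : V →ₗ[ℂ] H) ?_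
    · exact fun u => h u
    · rintro _ ⟨k, hk, rfl⟩
      obtain ⟨h1, heq⟩ := heig k
      show D ⟨e k, h1⟩ = _
      rw [heq, hk]
      simp
  set g : V →ₗ[ℂ] LinearMap.ker D.toFun :=
    LinearMap.codRestrict (LinearMap.ker D.toFun) (Submodule.inclusion hle)
      (fun u => LinearMap.mem_ker.mpr (bwd0 u)) with hg
  have E : (LinearMap.ker D.toFun) ≃ₗ[ℂ] V :=
    LinearEquiv.ofLinear f g (LinearMap.ext fun u => Subtype.ext rfl)
      (LinearMap.ext fun x => Subtype.ext (Subtype.ext rfl))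
  rw [E.finrank_eq, hV]
  exact card_span_eq e hfin

end Ker

theorem fiber_finite {l : ℕ → ℝ} {t : ℝ} (ht : 0 < t)
    (h : Summable fun k => Real.exp (-t * l k)) (r : ℝ) : {k | l k = r}.Finite := by
  have h0 := h.tendsto_atTop_zero
  have hev : ∀ᶠ k in Filter.atTop, Real.exp (-t * l k) < Real.exp (-t * r) :=
    h0.eventually_lt_const (Real.exp_pos _)
  rw [← Nat.cofinite_eq_atTop] at hev
  refine (Filter.eventually_cofinite.mp hev).subset ?_
  intro k hk
  simp only [Set.mem_setOf_eq] at hk ⊢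
  rw [hk]
  exact lt_irrefl _

theorem tsum_fiber {l : ℕ → ℝ} {t : ℝ} (h : Summable fun k => Real.exp (-t * l k)) :
    Summable (fun r : ℝ => (Nat.card {k | l k = r} : ℝ) * Real.exp (-t * r)) ∧
    (∑' k, Real.exp (-t * l k))
      = ∑' r : ℝ, (Nat.card {k | l k = r} : ℝ) * Real.exp (-t * r) := by
  classical
  have hs : Summable fun p : Σ r : ℝ, {k // l k = r} => Real.exp (-t * l p.2.1) :=
    (Equiv.sigmaFiberEquiv l).summable_iff.mpr h
  have hcard : ∀ r : ℝ, Nat.card {x // l x = r} = Nat.card {k | l k = r} :=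
    fun r => Nat.card_congr (Equiv.subtypeEquivRight fun k => Iff.rfl)
  have hinner : ∀ r : ℝ, (∑' x : {k // l k = r}, Real.exp (-t * l x.1))
      = (Nat.card {k | l k = r} : ℝ) * Real.exp (-t * r) := by
    intro r
    have hc : ∀ x : {k // l k = r}, Real.exp (-t * l x.1) = Real.exp (-t * r) := fun x => by
      rw [x.2]
    rw [tsum_congr hc, tsum_const, nsmul_eq_mul, hcard r]
  constructor
  · have := hs.sigma
    exact (summable_congr hinner).mp this
  · calc (∑' k, Real.exp (-t * l k))
        = ∑' p : Σ r : ℝ, {k // l k = r}, Real.exp (-t * l p.2.1) :=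
          ((Equiv.sigmaFiberEquiv l).tsum_eq fun k => Real.exp (-t * l k)).symm
      _ = ∑' r : ℝ, ∑' x : {k // l k = r}, Real.exp (-t * l x.1) := Summable.tsum_sigma hs
      _ = ∑' r : ℝ, (Nat.card {k | l k = r} : ℝ) * Real.exp (-t * r) := tsum_congr hinner

end Aux

/-- **McKean–Singer formula.** Let `T₁ : H₁ → H₂`, `T₂ : H₂ → H₃` be closed
densely defined operators with `im T₁ ⊆ ker T₂`, and suppose the Laplacians `Δ₁ = T₁†∘T₁`,
`Δ_mid = T₁∘T₁† + T₂†∘T₂`, `Δ₂ = T₂∘T₂†` all have discrete spectrum (eigenvalue sequences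
`l₁, l₂, l₃` for Hilbert bases of eigenvectors) with trace class heat semigroups.  Then for
every `t > 0`,
`Tr(e^{-tΔ₁}) − Tr(e^{-tΔ_mid}) + Tr(e^{-tΔ₂}) = dim ker Δ₁ − dim ker Δ_mid + dim ker Δ₂`. -/
theorem stmt18 {H₁ H₂ H₃ : Type*}
    [NormedAddCommGroup H₁] [InnerProductSpace ℂ H₁] [CompleteSpace H₁]
    [TopologicalSpace.SeparableSpace H₁]
    [NormedAddCommGroup H₂] [InnerProductSpace ℂ H₂] [CompleteSpace H₂]
    [TopologicalSpace.SeparableSpace H₂]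
    [NormedAddCommGroup H₃] [InnerProductSpace ℂ H₃] [CompleteSpace H₃]
    [TopologicalSpace.SeparableSpace H₃]
    (T₁ : H₁ →ₗ.[ℂ] H₂) (T₂ : H₂ →ₗ.[ℂ] H₃)
    (hd₁ : Dense (T₁.domain : Set H₁)) (hc₁ : T₁.IsClosed)
    (hd₂ : Dense (T₂.domain : Set H₂)) (hc₂ : T₂.IsClosed)
    (hcpx : pran T₁ ⊆ pker T₂) :
    ∀ D₁ : H₁ →ₗ.[ℂ] H₁, D₁ = pcomp T₁.adjoint T₁ →
    ∀ Dmid : H₂ →ₗ.[ℂ] H₂, Dmid = pcomp T₁ T₁.adjoint + pcomp T₂.adjoint T₂ →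
    ∀ D₂ : H₃ →ₗ.[ℂ] H₃, D₂ = pcomp T₂ T₂.adjoint →
    HasDiscreteSpectrum D₁ → HasDiscreteSpectrum Dmid → HasDiscreteSpectrum D₂ →
    ∀ (e₁ : HilbertBasis ℕ ℂ H₁) (l₁ : ℕ → ℝ), (∀ k, 0 ≤ l₁ k) →
      (∀ k, ∃ hk : e₁ k ∈ D₁.domain, D₁ ⟨e₁ k, hk⟩ = (l₁ k : ℂ) • e₁ k) →
    ∀ (e₂ : HilbertBasis ℕ ℂ H₂) (l₂ : ℕ → ℝ), (∀ k, 0 ≤ l₂ k) →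
      (∀ k, ∃ hk : e₂ k ∈ Dmid.domain, Dmid ⟨e₂ k, hk⟩ = (l₂ k : ℂ) • e₂ k) →
    ∀ (e₃ : HilbertBasis ℕ ℂ H₃) (l₃ : ℕ → ℝ), (∀ k, 0 ≤ l₃ k) →
      (∀ k, ∃ hk : e₃ k ∈ D₂.domain, D₂ ⟨e₃ k, hk⟩ = (l₃ k : ℂ) • e₃ k) →
    (∀ t : ℝ, 0 < t → (Summable fun k => Real.exp (-t * l₁ k)) ∧
      (Summable fun k => Real.exp (-t * l₂ k)) ∧ (Summable fun k => Real.exp (-t * l₃ k))) →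
    ∀ t : ℝ, 0 < t →
      (∑' k, Real.exp (-t * l₁ k)) - (∑' k, Real.exp (-t * l₂ k)) +
          (∑' k, Real.exp (-t * l₃ k)) =
        (Module.finrank ℂ (LinearMap.ker D₁.toFun) : ℝ) -
          (Module.finrank ℂ (LinearMap.ker Dmid.toFun) : ℝ) +
          (Module.finrank ℂ (LinearMap.ker D₂.toFun) : ℝ) := by
  intro D₁ hD₁ Dmid hDmid D₂ hD₂ _ _ _ e₁ l₁ hl₁ heig₁ e₂ l₂ hl₂ heig₂ e₃ l₃ hl₃ heig₃ hsum t ht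
  subst hD₁ hDmid hD₂
  classical
  obtain ⟨hs₁, hs₂, hs₃⟩ := hsum t ht
  have hfin₁ : ∀ r, {k | l₁ k = r}.Finite := fiber_finite ht hs₁
  have hfin₂ : ∀ r, {k | l₂ k = r}.Finite := fiber_finite ht hs₂
  have hfin₃ : ∀ r, {k | l₃ k = r}.Finite := fiber_finite ht hs₃
  have key : ∀ r : ℝ, 0 < r →
      Nat.card {k | l₂ k = r} = Nat.card {k | l₁ k = r} + Nat.card {k | l₃ k = r} :=
    fun r hr => core_card T₁ T₂ hd₁ hd₂ hcpx e₁ l₁ heig₁ e₂ l₂ heig₂ e₃ l₃ heig₃ hr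
      (hfin₁ r) (hfin₂ r) (hfin₃ r)
  set c₁ := Nat.card {k | l₁ k = 0} with hc₁'
  set c₂ := Nat.card {k | l₂ k = 0} with hc₂'
  set c₃ := Nat.card {k | l₃ k = 0} with hc₃'
  have hk₁ : Module.finrank ℂ (LinearMap.ker (pcomp T₁.adjoint T₁).toFun) = c₁ :=
    ker_card e₁ l₁ _ heig₁ (sym_down T₁ hd₁) (hfin₁ 0)
  have hk₂ : Module.finrank ℂ
      (LinearMap.ker (pcomp T₁ T₁.adjoint + pcomp T₂.adjoint T₂).toFun) = c₂ :=
    ker_card e₂ l₂ _ heig₂ (sym_mid T₁ T₂ hd₁ hd₂) (hfin₂ 0)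
  have hk₃ : Module.finrank ℂ (LinearMap.ker (pcomp T₂ T₂.adjoint).toFun) = c₃ :=
    ker_card e₃ l₃ _ heig₃ (sym_up T₂ hd₂) (hfin₃ 0)
  obtain ⟨hg₁, he₁⟩ := tsum_fiber hs₁
  obtain ⟨hg₂, he₂⟩ := tsum_fiber hs₂
  obtain ⟨hg₃, he₃⟩ := tsum_fiber hs₃
  set g₁ := fun r : ℝ => (Nat.card {k | l₁ k = r} : ℝ) * Real.exp (-t * r) with hg₁'
  set g₂ := fun r : ℝ => (Nat.card {k | l₂ k = r} : ℝ) * Real.exp (-t * r) with hg₂'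
  set g₃ := fun r : ℝ => (Nat.card {k | l₃ k = r} : ℝ) * Real.exp (-t * r) with hg₃'
  have hzero : ∀ (l : ℕ → ℝ), (∀ k, 0 ≤ l k) → ∀ r : ℝ, r < 0 → Nat.card {k | l k = r} = 0 := by
    intro l hl r hr
    have : {k | l k = r} = ∅ := by
      ext k
      simp only [Set.mem_setOf_eq, Set.mem_empty_iff_false, iff_false]
      intro hk
      exact absurd hk.symm (ne_of_lt (lt_of_lt_of_le hr (hl k)))
    rw [this]
    simp
  have hg2eq : g₂ = fun r => g₁ r + g₃ r + (if r = 0 then ((c₂ : ℝ) - c₁ - c₃) else 0) := by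
    funext r
    rcases lt_trichotomy r 0 with hneg | hzer | hpos
    · rw [if_neg (ne_of_lt hneg), hg₁', hg₂', hg₃']
      simp only
      rw [hzero l₁ hl₁ r hneg, hzero l₂ hl₂ r hneg, hzero l₃ hl₃ r hneg]
      norm_num
    · subst hzer
      rw [if_pos rfl, hg₁', hg₂', hg₃']
      simp only
      rw [← hc₁', ← hc₂', ← hc₃', mul_zero, Real.exp_zero]
      ring
    · rw [if_neg (ne_of_gt hpos), hg₁', hg₂', hg₃']
      simp only
      rw [key r hpos]
      push_cast
      ring
  have hite : Summable (fun r : ℝ => if r = 0 then ((c₂ : ℝ) - c₁ - c₃) else 0) :=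
    ⟨_, hasSum_ite_eq 0 _⟩
  have hsum2 : (∑' r, g₂ r) = (∑' r, g₁ r) + (∑' r, g₃ r) + ((c₂ : ℝ) - c₁ - c₃) := by
    rw [hg2eq, Summable.tsum_add (hg₁.add hg₃) hite, Summable.tsum_add hg₁ hg₃, tsum_ite_eq]
  rw [he₁, he₂, he₃, hk₁, hk₂, hk₃]
  rw [show (∑' r, g₂ r) = (∑' r, g₁ r) + (∑' r, g₃ r) + ((c₂ : ℝ) - c₁ - c₃) from hsum2]
  ring


end Paper
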